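/- Let n be a positive integer, M a subgroup of S_n, and g ∈ S_n an element that is either an n-cycle or a product of two disjoint cycles of lengths s and n-s (with 1 ≤ s ≤ n/2) covering {1,...,n}. Then g is contained in at most n² conjugates of M in S_n. -/

import Mathlib

open Equiv Equiv.Perm Finset

private lemma mem_conj_map' {G : Type*} [Group G] (M : Subgroup G) (x g : G) :
    g ∈ Subgroup.map (MulAut.conj x).toMonoidHom M ↔ x⁻¹ * g * x ∈ M := by
  simp only [Subgroup.mem_map, MulEquiv.coe_toMonoidHom, MulAut.conj_apply]
  constructor
  · rintro ⟨w, hw, rfl⟩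
    simpa [mul_assoc] using hw
  · intro h
    exact ⟨x⁻¹ * g * x, h, by group⟩

private lemma conj_map_mul' {G : Type*} [Group G] (M : Subgroup G) (x y : G) :
    Subgroup.map (MulAut.conj (x * y)).toMonoidHom M
      = Subgroup.map (MulAut.conj x).toMonoidHom
          (Subgroup.map (MulAut.conj y).toMonoidHom M) := by
  ext z
  simp [mem_conj_map', mul_assoc]

private lemma conj_map_self' {G : Type*} [Group G] (M : Subgroup G) {y : G} (hy : y ∈ M) :
    Subgroup.map (MulAut.conj y).toMonoidHom M = M := by
  ext z
  rw [mem_conj_map']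
  constructor
  · intro h
    have : y * (y⁻¹ * z * y) * y⁻¹ ∈ M := M.mul_mem (M.mul_mem hy h) (M.inv_mem hy)
    simpa [mul_assoc] using this
  · intro h
    exact M.mul_mem (M.mul_mem (M.inv_mem hy) h) hy

theorem at_most_n_sq_conjugates (n : ℕ) (M : Subgroup (Equiv.Perm (Fin n)))
    (g : Equiv.Perm (Fin n))
    (hg : (g.IsCycle ∧ g.support.card = n) ∨
      (∃ (s : ℕ) (c d : Equiv.Perm (Fin n)), 1 ≤ s ∧ 2 * s ≤ n ∧ g = c * d ∧
        c.IsCycle ∧ d.IsCycle ∧ Disjoint c.support d.support ∧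
        c.support.card = s ∧ d.support.card = n - s ∧
        c.support ∪ d.support = Finset.univ)) :
    Set.ncard {K : Subgroup (Equiv.Perm (Fin n)) |
      (∃ x : Equiv.Perm (Fin n),
        K = Subgroup.map (MulAut.conj x).toMonoidHom M) ∧ g ∈ K} ≤ n ^ 2 := by
  classical
  -- Step 1: two points whose g-orbits cover everything
  obtain ⟨a, b, hab⟩ : ∃ a b : Fin n, ∀ x : Fin n,
      (∃ i : ℤ, (g ^ i) a = x) ∨ (∃ i : ℤ, (g ^ i) b = x) := by
    rcases hg with ⟨hc, hcard⟩ | ⟨s, c, d, hs1, hs2, rfl, hc, hd, hdisj, hcs, hds, huniv⟩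
    · obtain ⟨a, ha⟩ := hc.nonempty_support
      have hu : g.support = Finset.univ :=
        Finset.eq_univ_of_card _ (by simpa using hcard)
      exact ⟨a, a, fun x => Or.inl
        (hc.sameCycle (mem_support.mp ha) (mem_support.mp (by rw [hu]; exact mem_univ x)))⟩
    · obtain ⟨a, ha⟩ := hc.nonempty_support
      obtain ⟨b, hb⟩ := hd.nonempty_support
      have hcd : Commute c d := (disjoint_iff_disjoint_support.mpr hdisj).commute
      refine ⟨a, b, fun x => ?_⟩
      have hx : x ∈ c.support ∪ d.support := huniv ▸ mem_univ x
      rcases Finset.mem_union.mp hx with hx | hx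
      · obtain ⟨i, hi⟩ := hc.sameCycle (mem_support.mp ha) (mem_support.mp hx)
        refine Or.inl ⟨i, ?_⟩
        have hda : (d ^ i) a = a := by
          rw [← notMem_support]
          intro h
          exact Finset.disjoint_left.mp hdisj ha (support_zpow_le d i h)
        calc ((c * d) ^ i) a = (c ^ i) ((d ^ i) a) := by rw [hcd.mul_zpow]; rfl
          _ = x := by rw [hda]; exact hi
      · obtain ⟨i, hi⟩ := hd.sameCycle (mem_support.mp hb) (mem_support.mp hx)
        refine Or.inr ⟨i, ?_⟩
        have hcx : (c ^ i) x = x := by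
          rw [← notMem_support]
          intro h
          exact Finset.disjoint_right.mp hdisj hx (support_zpow_le c i h)
        calc ((c * d) ^ i) b = (c ^ i) ((d ^ i) b) := by rw [hcd.mul_zpow]; rfl
          _ = x := by rw [hi]; exact hcx
  -- centralizer as a finset
  set C : Finset (Equiv.Perm (Fin n)) := Finset.univ.filter (fun h => Commute h g) with hC
  -- Step 2: centralizer bound
  have hCcard : C.card ≤ n ^ 2 := by
    have : C.card ≤ (Finset.univ : Finset (Fin n × Fin n)).card := by
      apply Finset.card_le_card_of_injOn (fun h => (h a, h b)) (fun _ _ => mem_univ _)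
      intro h1 h1m h2 h2m hpair
      simp only [Finset.coe_filter, Set.mem_setOf_eq, hC] at h1m h2m
      have hpa : h1 a = h2 a := congrArg Prod.fst hpair
      have hpb : h1 b = h2 b := congrArg Prod.snd hpair
      ext x
      have key : ∀ (h : Equiv.Perm (Fin n)), Commute h g → ∀ (i : ℤ) (y : Fin n),
          h ((g ^ i) y) = (g ^ i) (h y) := by
        intro h hcomm i y
        have : h * g ^ i = g ^ i * h := hcomm.zpow_right i
        calc h ((g ^ i) y) = (h * g ^ i) y := rfl
          _ = (g ^ i * h) y := by rw [this]
          _ = (g ^ i) (h y) := rfl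
      rcases hab x with ⟨i, rfl⟩ | ⟨i, rfl⟩
      · rw [key h1 h1m.2 i a, key h2 h2m.2 i a, hpa]
      · rw [key h1 h1m.2 i b, key h2 h2m.2 i b, hpb]
    simpa [sq] using this
  -- Step 3: counting
  set S : Finset (Equiv.Perm (Fin n)) :=
    Finset.univ.filter (fun x => g ∈ Subgroup.map (MulAut.conj x).toMonoidHom M) with hS
  set Tf : Finset (Subgroup (Equiv.Perm (Fin n))) :=
    S.image (fun x => Subgroup.map (MulAut.conj x).toMonoidHom M) with hTf
  have hTset : {K : Subgroup (Equiv.Perm (Fin n)) |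
      (∃ x : Equiv.Perm (Fin n), K = Subgroup.map (MulAut.conj x).toMonoidHom M) ∧ g ∈ K} = ↑Tf := by
    ext K
    simp only [Set.mem_setOf_eq, hTf, Finset.coe_image, Set.mem_image, Finset.mem_coe,
      hS, Finset.mem_filter, Finset.mem_univ, true_and]
    constructor
    · rintro ⟨⟨x, rfl⟩, hgK⟩
      exact ⟨x, hgK, rfl⟩
    · rintro ⟨x, hgx, rfl⟩
      exact ⟨⟨x, rfl⟩, hgx⟩
  rw [hTset, Set.ncard_coe_finset]
  set Mf : Finset (Equiv.Perm (Fin n)) := (M : Set (Equiv.Perm (Fin n))).toFinset with hMf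
  have hMpos : 0 < Mf.card := by
    apply Finset.card_pos.mpr
    exact ⟨1, by simp [hMf]⟩
  -- lower bound: Tf.card * Mf.card ≤ S.card
  have hlow : Tf.card * Mf.card ≤ S.card := by
    have h1 : S.card = ∑ K ∈ Tf,
        (S.filter (fun x => Subgroup.map (MulAut.conj x).toMonoidHom M = K)).card :=
      Finset.card_eq_sum_card_fiberwise (fun x hx => mem_image_of_mem _ hx)
    have h2 : ∀ K ∈ Tf, Mf.card ≤
        (S.filter (fun x => Subgroup.map (MulAut.conj x).toMonoidHom M = K)).card := by
      intro K hK
      obtain ⟨x₀, hx₀S, hx₀⟩ := Finset.mem_image.mp hK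
      apply Finset.card_le_card_of_injOn (fun y => x₀ * y)
      · intro y hy
        have hyM : y ∈ M := by simpa [hMf] using hy
        have hmap : Subgroup.map (MulAut.conj (x₀ * y)).toMonoidHom M
            = Subgroup.map (MulAut.conj x₀).toMonoidHom M := by
          rw [conj_map_mul', conj_map_self' M hyM]
        have hgx₀ : g ∈ Subgroup.map (MulAut.conj x₀).toMonoidHom M := by
          simpa [hS] using hx₀S
        refine Finset.mem_filter.mpr ⟨?_, by rw [hmap, hx₀]⟩
        simp only [hS, Finset.mem_filter, Finset.mem_univ, true_and]
        rw [hmap]; exact hgx₀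
      · intro y _ z _ h
        exact mul_left_cancel h
    calc Tf.card * Mf.card = ∑ _K ∈ Tf, Mf.card := by
          rw [Finset.sum_const, smul_eq_mul]
      _ ≤ ∑ K ∈ Tf,
        (S.filter (fun x => Subgroup.map (MulAut.conj x).toMonoidHom M = K)).card :=
          Finset.sum_le_sum h2
      _ = S.card := h1.symm
  -- upper bound: S.card ≤ Mf.card * C.card
  have hupp : S.card ≤ Mf.card * C.card := by
    set f : Equiv.Perm (Fin n) → Equiv.Perm (Fin n) := fun x => x⁻¹ * g * x with hf
    have himg : S.image f ⊆ Mf := by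
      intro v hv
      obtain ⟨x, hxS, rfl⟩ := Finset.mem_image.mp hv
      have : g ∈ Subgroup.map (MulAut.conj x).toMonoidHom M := by simpa [hS] using hxS
      simpa [hMf, hf] using (mem_conj_map' M x g).mp this
    have h1 : S.card = ∑ v ∈ S.image f, (S.filter (fun x => f x = v)).card :=
      Finset.card_eq_sum_card_fiberwise (fun x hx => mem_image_of_mem _ hx)
    have h2 : ∀ v ∈ S.image f, (S.filter (fun x => f x = v)).card ≤ C.card := by
      intro v hv
      obtain ⟨x₀, _, hx₀⟩ := Finset.mem_image.mp hv
      apply Finset.card_le_card_of_injOn (fun y => y * x₀⁻¹)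
      · intro y hy
        have hyv : f y = v := (Finset.mem_filter.mp hy).2
        have heq : y⁻¹ * g * y = x₀⁻¹ * g * x₀ := by
          rw [show y⁻¹ * g * y = f y from rfl, hyv, ← hx₀]
        simp only [hC, Finset.mem_coe, Finset.mem_filter, Finset.mem_univ, true_and]
        show (y * x₀⁻¹) * g = g * (y * x₀⁻¹)
        calc (y * x₀⁻¹) * g = y * (x₀⁻¹ * g * x₀) * x₀⁻¹ := by group
          _ = y * (y⁻¹ * g * y) * x₀⁻¹ := by rw [heq]
          _ = g * (y * x₀⁻¹) := by group
      · intro y _ z _ h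
        exact mul_right_cancel h
    calc S.card = ∑ v ∈ S.image f, (S.filter (fun x => f x = v)).card := h1
      _ ≤ ∑ _v ∈ S.image f, C.card := Finset.sum_le_sum h2
      _ = (S.image f).card * C.card := by rw [Finset.sum_const, smul_eq_mul]
      _ ≤ Mf.card * C.card :=
          Nat.mul_le_mul_right _ (Finset.card_le_card himg)
  -- combine
  have : Tf.card * Mf.card ≤ C.card * Mf.card := by
    calc Tf.card * Mf.card ≤ S.card := hlow
      _ ≤ Mf.card * C.card := hupp
      _ = C.card * Mf.card := Nat.mul_comm _ _
  exact le_trans (Nat.le_of_mul_le_mul_right this hMpos) hCcard
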